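/- arXiv:1702.06103 — 2 statements merged into one kernel-verified Lean document; each statement's English description precedes it below -/
import Mathlib

section
/- Let X₁,…,Xₙ be {0,1}-valued random variables adapted to a filtration F₁,…,Fₙ (each Xᵢ may depend on the previous ones), and let E_γ be the event {for all i: E[Xᵢ | F_{i−1}] ≥ γ} for some γ > 0. Then P( (∑_{i=1}^n Xᵢ ≤ nγ/2) ∧ E_γ ) ≤ exp(−nγ/8). -/
open MeasureTheory Finset

theorem stmt_6 {Ω : Type*} {m0 : MeasurableSpace Ω} (μ : Measure Ω) [IsProbabilityMeasure μ]
    (𝒢 : Filtration ℕ m0) (X : ℕ → Ω → ℝ) (n : ℕ) (γ : ℝ) (hγ : 0 < γ)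
    (hadapt : ∀ i, StronglyMeasurable[𝒢 i] (X i))
    (hber : ∀ i ω, X i ω = 0 ∨ X i ω = 1) :
    μ {ω | (∑ i ∈ Finset.Icc 1 n, X i ω ≤ n * γ / 2) ∧
        ∀ i ∈ Finset.Icc 1 n, γ ≤ (μ[X i | 𝒢 (i - 1)]) ω} ≤
      ENNReal.ofReal (Real.exp (-(n * γ) / 8)) := by
  classical
  set c : ℝ := 1 - Real.exp (-1) with hc_def
  have he1 : Real.exp (-1 : ℝ) < 3/8 := by
    have h9 : (2.7182818283 : ℝ) < Real.exp 1 := Real.exp_one_gt_d9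
    have : Real.exp (-1 : ℝ) = (Real.exp 1)⁻¹ := by
      rw [Real.exp_neg]
    rw [this]
    rw [inv_lt_iff_one_lt_mul₀ (lt_trans (by norm_num) h9)]
    nlinarith
  have hepos : 0 < Real.exp (-1 : ℝ) := Real.exp_pos _
  have hc_pos : 0 < c := by simp only [hc_def]; linarith
  have hc58 : 5/8 ≤ c := by simp only [hc_def]; linarith
  set m : ℕ → Ω → ℝ := fun i => μ[X i | 𝒢 (i - 1)] with hm_def
  -- basic facts
  have hX01 : ∀ i ω, 0 ≤ X i ω ∧ X i ω ≤ 1 := by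
    intro i ω; rcases hber i ω with h | h <;> rw [h] <;> norm_num
  have hXmeas : ∀ i, Measurable (X i) :=
    fun i => ((hadapt i).mono (𝒢.le i)).measurable
  have hXint : ∀ i, Integrable (X i) μ := by
    intro i
    refine (integrable_const (1 : ℝ)).mono' ((hXmeas i).aestronglyMeasurable) ?_
    filter_upwards with ω
    rw [Real.norm_eq_abs, abs_le]
    exact ⟨by linarith [(hX01 i ω).1], (hX01 i ω).2⟩
  have hm_meas : ∀ i, Measurable[𝒢 (i - 1)] (m i) :=
    fun i => stronglyMeasurable_condExp.measurable
  have hm_meas0 : ∀ i, Measurable (m i) :=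
    fun i => (hm_meas i).mono (𝒢.le (i - 1)) le_rfl
  have hm_le : ∀ i, ∀ᵐ ω ∂μ, m i ω ≤ 1 := by
    intro i
    have h1 : μ[fun _ => (1 : ℝ) | 𝒢 (i - 1)] = fun _ => (1 : ℝ) :=
      condExp_const (μ := μ) (𝒢.le (i - 1)) (1 : ℝ)
    have h2 : m i ≤ᵐ[μ] μ[fun _ => (1 : ℝ) | 𝒢 (i - 1)] :=
      condExp_mono (hXint i) (integrable_const 1)
        (Filter.Eventually.of_forall fun ω => (hX01 i ω).2)
    filter_upwards [h2] with ω hω2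
    rw [h1] at hω2; exact hω2
  have hm_nonneg : ∀ i, ∀ᵐ ω ∂μ, 0 ≤ m i ω := by
    intro i
    exact condExp_nonneg (Filter.Eventually.of_forall fun ω => (hX01 i ω).1)
  -- the supermartingale
  set f : ℕ → Ω → ℝ := fun i ω => Real.exp (c * min (m i ω) 1 - X i ω) with hf_def
  set G : ℕ → Ω → ℝ := fun k ω => ∏ i ∈ Icc 1 k, f i ω with hG_def
  have hf_nonneg : ∀ i ω, 0 ≤ f i ω := fun i ω => (Real.exp_pos _).le
  have hf_le : ∀ i ω, f i ω ≤ Real.exp c := by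
    intro i ω
    apply Real.exp_le_exp.2
    have h1 : min (m i ω) 1 ≤ 1 := min_le_right _ _
    nlinarith [(hX01 i ω).1]
  have hG_nonneg : ∀ k ω, 0 ≤ G k ω :=
    fun k ω => Finset.prod_nonneg fun i _ => hf_nonneg i ω
  have hG_le : ∀ k ω, G k ω ≤ Real.exp c ^ k := by
    intro k ω
    calc G k ω ≤ ∏ _i ∈ Icc 1 k, Real.exp c :=
          Finset.prod_le_prod (fun i _ => hf_nonneg i ω) (fun i _ => hf_le i ω)
      _ = Real.exp c ^ k := by simp [Nat.card_Icc]
  have hf_measG : ∀ i k, i ∈ Icc 1 k → Measurable[𝒢 k] (f i) := by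
    intro i k hik
    rw [Finset.mem_Icc] at hik
    have hmi : Measurable[𝒢 k] (m i) :=
      (hm_meas i).mono (𝒢.mono (by omega)) le_rfl
    have hXi : Measurable[𝒢 k] (X i) :=
      ((hadapt i).measurable).mono (𝒢.mono hik.2) le_rfl
    exact Real.measurable_exp.comp ((measurable_const.mul (hmi.min measurable_const)).sub hXi)
  have hG_meas : ∀ k, Measurable[𝒢 k] (G k) := by
    intro k
    exact Finset.measurable_prod _ fun i hi => hf_measG i k hi
  have hG_meas0 : ∀ k, Measurable (G k) := fun k => (hG_meas k).mono (𝒢.le k) le_rfl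
  have hG_int : ∀ k, Integrable (G k) μ := by
    intro k
    refine (integrable_const (Real.exp c ^ k)).mono' (hG_meas0 k).aestronglyMeasurable ?_
    filter_upwards with ω
    rw [Real.norm_eq_abs, abs_of_nonneg (hG_nonneg k ω)]
    exact hG_le k ω
  have key : ∀ k, ∫ ω, G k ω ∂μ ≤ 1 := by
    intro k
    induction k with
    | zero => simp [hG_def]
    | succ k ih =>
      haveI : SigmaFinite (μ.trim (𝒢.le k)) := by infer_instance
      set g : Ω → ℝ := fun ω => G k ω * Real.exp (c * min (m (k+1) ω) 1) with hg_def
      set h : Ω → ℝ := fun ω => Real.exp (-(X (k+1) ω)) with hh_def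
      have hsplit : G (k+1) = fun ω => g ω * h ω := by
        funext ω
        have hi : Icc 1 (k+1) = insert (k+1) (Icc 1 k) := by
          ext x; simp only [Finset.mem_Icc, Finset.mem_insert]; omega
        have hnotmem : (k+1) ∉ Icc 1 k := by simp
        simp only [hG_def, hi, Finset.prod_insert hnotmem, hg_def, hh_def, hf_def]
        rw [show c * min (m (k+1) ω) 1 - X (k+1) ω
            = c * min (m (k+1) ω) 1 + -(X (k+1) ω) by ring, Real.exp_add]
        ring
      have hg_nonneg : ∀ ω, 0 ≤ g ω :=
        fun ω => mul_nonneg (hG_nonneg k ω) (Real.exp_pos _).le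
      have hg_bdd : ∀ ω, g ω ≤ Real.exp c ^ (k+1) := by
        intro ω
        have h1 : Real.exp (c * min (m (k+1) ω) 1) ≤ Real.exp c := by
          apply Real.exp_le_exp.2
          nlinarith [min_le_right (m (k+1) ω) (1:ℝ), hc_pos]
        calc g ω ≤ Real.exp c ^ k * Real.exp c :=
              mul_le_mul (hG_le k ω) h1 (Real.exp_pos _).le (pow_nonneg (Real.exp_pos _).le k)
          _ = Real.exp c ^ (k+1) := by ring
      have hg_meas : Measurable[𝒢 k] g := by
        have hmk : Measurable[𝒢 k] (m (k+1)) := hm_meas (k+1)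
        exact (hG_meas k).mul
          (Real.measurable_exp.comp (measurable_const.mul (hmk.min measurable_const)))
      have hg_meas0 : Measurable g := hg_meas.mono (𝒢.le k) le_rfl
      have hg_int : Integrable g μ := by
        refine (integrable_const (Real.exp c ^ (k+1))).mono' hg_meas0.aestronglyMeasurable ?_
        filter_upwards with ω
        rw [Real.norm_eq_abs, abs_of_nonneg (hg_nonneg ω)]
        exact hg_bdd ω
      have hh_eq : h = fun ω => 1 - c * X (k+1) ω := by
        funext ω
        rcases hber (k+1) ω with hx | hx <;> simp [hh_def, hx, hc_def]
      have hh_int : Integrable h μ := by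
        rw [hh_eq]
        exact (integrable_const 1).sub ((hXint (k+1)).const_mul c)
      have hgh_int : Integrable (g * h) μ := by
        refine (integrable_const (Real.exp c ^ (k+1))).mono'
          (hg_meas0.mul ((Real.measurable_exp.comp (hXmeas (k+1)).neg))).aestronglyMeasurable ?_
        filter_upwards with ω
        have hh01 : 0 ≤ h ω ∧ h ω ≤ 1 := by
          constructor
          · exact (Real.exp_pos _).le
          · simp only [hh_def]
            rw [show (1:ℝ) = Real.exp 0 by simp]
            apply Real.exp_le_exp.2
            linarith [(hX01 (k+1) ω).1]
        simp only [Pi.mul_apply, Real.norm_eq_abs,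
          abs_of_nonneg (mul_nonneg (hg_nonneg ω) hh01.1)]
        calc g ω * h ω ≤ g ω * 1 := by nlinarith [hg_nonneg ω]
          _ ≤ Real.exp c ^ (k+1) := by rw [mul_one]; exact hg_bdd ω
      have hpull : μ[g * h | 𝒢 k] =ᵐ[μ] g * μ[h | 𝒢 k] :=
        condExp_mul_of_stronglyMeasurable_left hg_meas.stronglyMeasurable hgh_int hh_int
      have hcond_h : μ[h | 𝒢 k] =ᵐ[μ] fun ω => 1 - c * m (k+1) ω := by
        rw [hh_eq]
        have h1 : (fun ω => 1 - c * X (k+1) ω)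
            = (fun _ => (1:ℝ)) - fun ω => c * X (k+1) ω := by funext ω; simp
        rw [h1]
        have h2 := condExp_sub (μ := μ) (m := 𝒢 k) (integrable_const (1:ℝ))
          ((hXint (k+1)).const_mul c)
        refine h2.trans ?_
        have h3 : μ[fun _ => (1:ℝ) | 𝒢 k] = fun _ => (1:ℝ) := condExp_const (μ := μ) (𝒢.le k) (1 : ℝ)
        have h4 : μ[fun ω => c * X (k+1) ω | 𝒢 k] =ᵐ[μ] fun ω => c * m (k+1) ω := by
          have h5 : (fun ω => c * X (k+1) ω) = c • X (k+1) := by funext ω; simp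
          rw [h5]
          refine (condExp_smul c (X (k+1)) (𝒢 k)).trans ?_
          have : m (k+1) = μ[X (k+1) | 𝒢 k] := by simp [hm_def]
          rw [this]
          filter_upwards with ω; simp
        filter_upwards [h4] with ω hω4
        simp only [Pi.sub_apply, h3, hω4]
      calc ∫ ω, G (k+1) ω ∂μ = ∫ ω, g ω * h ω ∂μ := by rw [hsplit]
        _ = ∫ ω, (μ[g * h | 𝒢 k]) ω ∂μ := (integral_condExp (𝒢.le k)).symm
        _ = ∫ ω, g ω * (μ[h | 𝒢 k]) ω ∂μ := integral_congr_ae hpull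
        _ = ∫ ω, g ω * (1 - c * m (k+1) ω) ∂μ := by
            refine integral_congr_ae ?_
            filter_upwards [hcond_h] with ω hω
            rw [hω]
        _ ≤ ∫ ω, G k ω ∂μ := by
            refine integral_mono_ae ?_ (hG_int k) ?_
            · refine (integrable_const ((Real.exp c ^ (k+1)) * 1)).mono'
                (hg_meas0.mul ((measurable_const.sub
                  (measurable_const.mul (hm_meas0 (k+1)))))).aestronglyMeasurable ?_
              filter_upwards [hm_le (k+1), hm_nonneg (k+1)] with ω h1 h0
              rw [Real.norm_eq_abs, abs_mul, abs_of_nonneg (hg_nonneg ω)]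
              have : |1 - c * m (k+1) ω| ≤ 1 := by
                rw [abs_le]; constructor <;> nlinarith
              nlinarith [hg_nonneg ω, hg_bdd ω]
            · filter_upwards [hm_le (k+1)] with ω h1
              set mm := m (k+1) ω
              have hmin : min mm 1 ≤ mm := min_le_left _ _
              have hstep : Real.exp (c * min mm 1) * (1 - c * mm) ≤ 1 := by
                have e1 : Real.exp (c * min mm 1) ≤ Real.exp (c * mm) :=
                  Real.exp_le_exp.2 (by nlinarith)
                have e2 : 1 - c * mm ≤ Real.exp (-(c * mm)) := by
                  linarith [Real.add_one_le_exp (-(c * mm))]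
                have e3 : 0 ≤ 1 - c * mm := by nlinarith
                calc Real.exp (c * min mm 1) * (1 - c * mm)
                    ≤ Real.exp (c * mm) * Real.exp (-(c * mm)) := by
                      apply mul_le_mul e1 e2 e3 (Real.exp_pos _).le
                  _ = 1 := by rw [← Real.exp_add]; simp
              have : g ω * (1 - c * mm) = G k ω * (Real.exp (c * min mm 1) * (1 - c * mm)) := by
                simp only [hg_def]; ring
              rw [this]
              nlinarith [hG_nonneg k ω]
        _ ≤ 1 := ih
  -- now the conclusion
  set A := {ω | (∑ i ∈ Finset.Icc 1 n, X i ω ≤ n * γ / 2) ∧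
      ∀ i ∈ Finset.Icc 1 n, γ ≤ (μ[X i | 𝒢 (i - 1)]) ω} with hA_def
  by_cases hn : n = 0
  · subst hn
    calc μ A ≤ 1 := prob_le_one
      _ = ENNReal.ofReal (Real.exp (-(↑(0:ℕ) * γ) / 8)) := by simp
  · by_cases hγ1 : γ ≤ 1
    · -- main case
      set ε : ℝ := Real.exp (n * γ * c - n * γ / 2) with hε_def
      have hεpos : 0 < ε := Real.exp_pos _
      have hsub : A ⊆ {ω | ε ≤ G n ω} := by
        intro ω hω
        obtain ⟨hsum, hall⟩ := hω
        simp only [Set.mem_setOf_eq]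
        have hGexp : G n ω = Real.exp (∑ i ∈ Icc 1 n, (c * min (m i ω) 1 - X i ω)) := by
          rw [Real.exp_sum]
        rw [hGexp, hε_def]
        apply Real.exp_le_exp.2
        have hlow : (n : ℝ) * γ * c ≤ ∑ i ∈ Icc 1 n, c * min (m i ω) 1 := by
          have : ∀ i ∈ Icc 1 n, c * γ ≤ c * min (m i ω) 1 := by
            intro i hi
            have hγm : γ ≤ m i ω := hall i hi
            have : γ ≤ min (m i ω) 1 := le_min hγm hγ1
            nlinarith
          calc (n:ℝ) * γ * c = ∑ _i ∈ Icc 1 n, c * γ := by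
                simp [Nat.card_Icc]; ring
            _ ≤ _ := Finset.sum_le_sum this
        rw [Finset.sum_sub_distrib]
        exact sub_le_sub hlow hsum
      have hmarkov := mul_meas_ge_le_integral_of_nonneg
        (Filter.Eventually.of_forall (fun ω => hG_nonneg n ω)) (hG_int n) ε
      have hint1 : ∫ ω, G n ω ∂μ ≤ 1 := key n
      have htoReal : (μ {ω | ε ≤ G n ω}).toReal ≤ ε⁻¹ := by
        rw [inv_eq_one_div]
        rw [le_div_iff₀ hεpos]
        nlinarith [hmarkov, hint1, measureReal_def μ {ω | ε ≤ G n ω}]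
      have hμA : μ A ≤ ENNReal.ofReal (ε⁻¹) := by
        calc μ A ≤ μ {ω | ε ≤ G n ω} := measure_mono hsub
          _ = ENNReal.ofReal ((μ {ω | ε ≤ G n ω}).toReal) := by
              rw [ENNReal.ofReal_toReal (measure_ne_top μ _)]
          _ ≤ ENNReal.ofReal (ε⁻¹) := ENNReal.ofReal_le_ofReal htoReal
      refine hμA.trans (ENNReal.ofReal_le_ofReal ?_)
      rw [hε_def, ← Real.exp_neg]
      apply Real.exp_le_exp.2
      have hnγ : 0 ≤ (n:ℝ) * γ := by positivity
      nlinarith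
    · -- γ > 1 : the event is null
      push_neg at hγ1
      have h1n : 1 ∈ Icc 1 n := by
        rw [Finset.mem_Icc]; omega
      have hsub : A ⊆ {ω | 1 < m 1 ω} := by
        intro ω hω
        have := hω.2 1 h1n
        simp only [Set.mem_setOf_eq]
        calc (1:ℝ) < γ := hγ1
          _ ≤ m 1 ω := this
      have hnull : μ {ω | 1 < m 1 ω} = 0 := by
        have := hm_le 1
        rw [ae_iff] at this
        convert this using 2
        ext ω; simp
      calc μ A ≤ μ {ω | 1 < m 1 ω} := measure_mono hsub
        _ = 0 := hnull
        _ ≤ _ := zero_le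
end

section
/- Under the setting of the adapted Bernoulli sequence with conditional means at least γ on the event E_γ, for any λ ∈ (0,2] and δ > 0: P( (∑_{i=1}^n Xᵢ ≤ nγ − (λ/2)nγ − (ln(1/δ))/λ) ∧ E_γ ) ≤ δ. -/
open MeasureTheory

lemma aux_exp_quad (x : ℝ) (hx : 0 ≤ x) : Real.exp (-x) ≤ 1 - x + x ^ 2 / 2 := by
  have hd : ∀ y : ℝ, HasDerivAt (fun y : ℝ => 1 - y + y ^ 2 / 2 - Real.exp (-y))
      (-1 + y + Real.exp (-y)) y := by
    intro y
    have h1 : HasDerivAt (fun y : ℝ => 1 - y) (-1) y := by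
      simpa using (hasDerivAt_id' y).const_sub (1 : ℝ)
    have h2 : HasDerivAt (fun y : ℝ => y ^ 2 / 2) y y := by
      have := (hasDerivAt_pow 2 y).div_const 2
      simpa using this
    have h3 : HasDerivAt (fun y : ℝ => Real.exp (-y)) (-Real.exp (-y)) y := by
      simpa using (hasDerivAt_id' y).neg.exp
    have := (h1.add h2).sub h3
    exact this.congr_deriv (by ring)
  have hmono : Monotone (fun y : ℝ => 1 - y + y ^ 2 / 2 - Real.exp (-y)) := by
    apply monotone_of_deriv_nonneg
    · exact fun y => (hd y).differentiableAt
    · intro y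
      rw [(hd y).deriv]
      have := Real.add_one_le_exp (-y)
      linarith
  have h := hmono hx
  simp only [pow_two] at h ⊢
  norm_num at h
  linarith [h]

theorem stmt_7 {Ω : Type*} {m0 : MeasurableSpace Ω} (μ : Measure Ω) [IsProbabilityMeasure μ]
    (𝒢 : Filtration ℕ m0) (X : ℕ → Ω → ℝ) (n : ℕ) (γ : ℝ) (hγ : 0 < γ)
    (hadapt : ∀ i, StronglyMeasurable[𝒢 i] (X i))
    (hber : ∀ i ω, X i ω = 0 ∨ X i ω = 1)
    (lam δ : ℝ) (hlam : 0 < lam) (hlam2 : lam ≤ 2) (hδ0 : 0 < δ) (hδ1 : δ < 1) :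
    μ {ω | (∑ i ∈ Finset.Icc 1 n, X i ω ≤
          n * γ - lam / 2 * (n * γ) - Real.log (1 / δ) / lam) ∧
        ∀ i ∈ Finset.Icc 1 n, γ ≤ (μ[X i | 𝒢 (i - 1)]) ω} ≤
      ENNReal.ofReal δ := by
  classical
  set p : ℕ → Ω → ℝ := fun i => μ[X i | 𝒢 (i - 1)] with hp
  set c : ℝ := γ * (lam - lam ^ 2 / 2) with hc
  set D : ℕ → Ω → ℝ := fun i => Set.indicator {ω | γ ≤ p i ω} (fun _ => (1 : ℝ)) with hD
  set Z : ℕ → Ω → ℝ :=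
    fun k ω => ∏ i ∈ Finset.Icc 1 k, (Real.exp (c - lam * X i ω) * D i ω) with hZ
  -- basic facts
  have hX01 : ∀ i ω, 0 ≤ X i ω ∧ X i ω ≤ 1 := by
    intro i ω; rcases hber i ω with h | h <;> rw [h] <;> norm_num
  have hXsm : ∀ i, StronglyMeasurable (X i) := fun i => (hadapt i).mono (𝒢.le i)
  have hXint : ∀ i, Integrable (X i) μ := by
    intro i
    refine (integrable_const (1 : ℝ)).mono' (hXsm i).aestronglyMeasurable ?_
    filter_upwards with ω
    rw [Real.norm_eq_abs, abs_of_nonneg (hX01 i ω).1]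
    exact (hX01 i ω).2
  have hSmeas : ∀ i, MeasurableSet[𝒢 (i - 1)] {ω | γ ≤ p i ω} :=
    fun i => measurableSet_le measurable_const stronglyMeasurable_condExp.measurable
  have hDsm : ∀ i, StronglyMeasurable[𝒢 (i - 1)] (D i) :=
    fun i => stronglyMeasurable_const.indicator (hSmeas i)
  have hD01 : ∀ i ω, D i ω = 0 ∨ D i ω = 1 := by
    intro i ω
    by_cases h : ω ∈ {ω | γ ≤ p i ω}
    · right; simp [hD, Set.indicator_of_mem h]
    · left; simp [hD, Set.indicator_of_notMem h]
  have hfac_nonneg : ∀ i ω, 0 ≤ Real.exp (c - lam * X i ω) * D i ω := by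
    intro i ω
    rcases hD01 i ω with h | h <;> rw [h] <;> positivity
  have hfac_le : ∀ i ω, Real.exp (c - lam * X i ω) * D i ω ≤ Real.exp c := by
    intro i ω
    have h1 : Real.exp (c - lam * X i ω) ≤ Real.exp c := by
      apply Real.exp_le_exp.2
      nlinarith [(hX01 i ω).1, hlam.le]
    rcases hD01 i ω with h | h
    · rw [h, mul_zero]; positivity
    · rw [h, mul_one]; exact h1
  have hZnonneg : ∀ k ω, 0 ≤ Z k ω := by
    intro k ω; exact Finset.prod_nonneg fun i _ => hfac_nonneg i ω
  have hZle : ∀ k ω, Z k ω ≤ Real.exp c ^ k := by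
    intro k ω
    calc Z k ω ≤ ∏ _i ∈ Finset.Icc 1 k, Real.exp c :=
          Finset.prod_le_prod (fun i _ => hfac_nonneg i ω) (fun i _ => hfac_le i ω)
      _ = Real.exp c ^ k := by rw [Finset.prod_const, Nat.card_Icc]; norm_num
  have hexpXsm : ∀ (m : MeasurableSpace Ω) i, StronglyMeasurable[𝒢 i] (X i) →
      True := fun _ _ _ => trivial
  have hfacsm : ∀ i, StronglyMeasurable[𝒢 i] (fun ω => Real.exp (c - lam * X i ω) * D i ω) := by
    intro i
    have h1 : StronglyMeasurable[𝒢 i] (fun ω => Real.exp (c - lam * X i ω)) :=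
      Real.continuous_exp.comp_stronglyMeasurable
        (stronglyMeasurable_const.sub ((hadapt i).const_mul lam))
    exact h1.mul ((hDsm i).mono (𝒢.mono (Nat.sub_le i 1)))
  have hZsm : ∀ k, StronglyMeasurable[𝒢 k] (Z k) := by
    intro k
    apply Finset.stronglyMeasurable_fun_prod
    intro i hi
    have hik : i ≤ k := (Finset.mem_Icc.1 hi).2
    exact (hfacsm i).mono (𝒢.mono hik)
  have hZint : ∀ k, Integrable (Z k) μ := by
    intro k
    refine (integrable_const (Real.exp c ^ k)).mono'
      ((hZsm k).mono (𝒢.le k)).aestronglyMeasurable ?_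
    filter_upwards with ω
    rw [Real.norm_eq_abs, abs_of_nonneg (hZnonneg k ω)]
    exact hZle k ω
  -- main induction: ∫ Z k ≤ 1
  have hkey : ∀ k, ∫ ω, Z k ω ∂μ ≤ 1 := by
    intro k
    induction k with
    | zero =>
        simp [hZ, Finset.Icc_eq_empty (by norm_num : ¬ (1 : ℕ) ≤ 0)]
    | succ m ih =>
        set a : ℝ := 1 - Real.exp (-lam) with ha
        have ha0 : 0 ≤ a := by
          have : Real.exp (-lam) ≤ 1 := Real.exp_le_one_iff.2 (by linarith)
          linarith
        set f : Ω → ℝ := fun ω => Z m ω * D (m + 1) ω * Real.exp c with hf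
        set g : Ω → ℝ := fun ω => Real.exp (-(lam * X (m + 1) ω)) with hg
        have hsplit : Z (m + 1) = f * g := by
          funext ω
          show (∏ i ∈ Finset.Icc 1 (m + 1), _) = _
          rw [Finset.prod_Icc_succ_top (Nat.le_add_left 1 m)]
          show Z m ω * (Real.exp (c - lam * X (m + 1) ω) * D (m + 1) ω)
            = Z m ω * D (m + 1) ω * Real.exp c * Real.exp (-(lam * X (m + 1) ω))
          rw [sub_eq_add_neg, Real.exp_add]
          ring
        have hfsm : StronglyMeasurable[𝒢 m] f := by
          have h1 : StronglyMeasurable[𝒢 m] (D (m + 1)) := by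
            have := hDsm (m + 1)
            simpa using this
          exact ((hZsm m).mul h1).mul stronglyMeasurable_const
        have hgint : Integrable g μ := by
          refine (integrable_const (1 : ℝ)).mono'
            (Real.continuous_exp.comp_stronglyMeasurable
              (((hXsm (m+1)).const_mul lam).neg)).aestronglyMeasurable ?_
          filter_upwards with ω
          rw [Real.norm_eq_abs, abs_of_nonneg (Real.exp_pos _).le]
          apply Real.exp_le_one_iff.2
          have := (hX01 (m+1) ω).1
          nlinarith [hlam.le]
        have hfgint : Integrable (f * g) μ := by rw [← hsplit]; exact hZint (m + 1)
        have hpull : μ[f * g | 𝒢 m] =ᵐ[μ] f * μ[g | 𝒢 m] :=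
          condExp_mul_of_stronglyMeasurable_left hfsm hfgint hgint
        -- compute μ[g | 𝒢 m]
        have hgeq : g = (fun _ => (1 : ℝ)) - a • X (m + 1) := by
          funext ω
          simp only [Pi.sub_apply, Pi.smul_apply, smul_eq_mul, hg, ha]
          rcases hber (m + 1) ω with h | h <;> rw [h] <;> simp
        have hgcond : μ[g | 𝒢 m] =ᵐ[μ] fun ω => 1 - a * p (m + 1) ω := by
          rw [hgeq]
          have h1 := condExp_sub (μ := μ) (m := 𝒢 m) (integrable_const (1 : ℝ))
            ((hXint (m + 1)).smul a)
          have h2 := condExp_smul (μ := μ) (m := 𝒢 m) a (X (m + 1))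
          have h3 : μ[(fun _ => (1:ℝ)) | 𝒢 m] = fun _ => (1:ℝ) := condExp_const (𝒢.le m) 1
          filter_upwards [h1, h2] with ω h1ω h2ω
          have hpm : p (m + 1) = μ[X (m + 1) | 𝒢 m] := by
            simp [hp]
          rw [h1ω]
          simp only [Pi.sub_apply, h3, h2ω, Pi.smul_apply, smul_eq_mul, hpm]
        -- a.e. bound : μ[Z (m+1) | 𝒢 m] ≤ Z m
        have hbound : μ[Z (m + 1) | 𝒢 m] ≤ᵐ[μ] Z m := by
          rw [hsplit]
          filter_upwards [hpull, hgcond] with ω h1ω h2ω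
          rw [h1ω]
          simp only [Pi.mul_apply, h2ω]
          by_cases hω : ω ∈ {ω | γ ≤ p (m + 1) ω}
          · have hDone : D (m + 1) ω = 1 := by simp [hD, Set.indicator_of_mem hω]
            have hpγ : γ ≤ p (m + 1) ω := hω
            simp only [hf, hDone, mul_one]
            have hchain : Real.exp c * (1 - a * p (m + 1) ω) ≤ 1 := by
              have s1 : 1 - a * p (m + 1) ω ≤ 1 - a * γ := by nlinarith
              have s2 : 1 - a * γ ≤ Real.exp (-(a * γ)) := by
                have := Real.add_one_le_exp (-(a * γ)); linarith
              have s3 : Real.exp (-(a * γ)) ≤ Real.exp (-c) := by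
                apply Real.exp_le_exp.2
                have hq := aux_exp_quad lam hlam.le
                have : lam - lam ^ 2 / 2 ≤ a := by simp only [ha]; linarith
                have : c ≤ a * γ := by
                  rw [hc]
                  nlinarith [hγ.le]
                linarith
              calc Real.exp c * (1 - a * p (m + 1) ω)
                  ≤ Real.exp c * Real.exp (-c) := by
                    apply mul_le_mul_of_nonneg_left _ (Real.exp_pos c).le
                    linarith
                _ = 1 := by rw [← Real.exp_add]; simp
            calc Z m ω * Real.exp c * (1 - a * p (m + 1) ω)
                = Z m ω * (Real.exp c * (1 - a * p (m + 1) ω)) := by ring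
              _ ≤ Z m ω * 1 := mul_le_mul_of_nonneg_left hchain (hZnonneg m ω)
              _ = Z m ω := mul_one _
          · have hDzero : D (m + 1) ω = 0 := by simp [hD, Set.indicator_of_notMem hω]
            simp only [hf, hDzero, mul_zero, zero_mul]
            exact hZnonneg m ω
        have hint : ∫ ω, Z (m + 1) ω ∂μ = ∫ ω, (μ[Z (m + 1) | 𝒢 m]) ω ∂μ :=
          (integral_condExp (𝒢.le m)).symm
        calc ∫ ω, Z (m + 1) ω ∂μ = ∫ ω, (μ[Z (m + 1) | 𝒢 m]) ω ∂μ := hint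
          _ ≤ ∫ ω, Z m ω ∂μ := integral_mono_ae integrable_condExp (hZint m) hbound
          _ ≤ 1 := ih
  -- Markov step
  set t : ℝ := n * γ - lam / 2 * (n * γ) - Real.log (1 / δ) / lam with ht
  have hsubset : {ω | (∑ i ∈ Finset.Icc 1 n, X i ω ≤ t) ∧
      ∀ i ∈ Finset.Icc 1 n, γ ≤ (μ[X i | 𝒢 (i - 1)]) ω} ⊆ {ω | 1 / δ ≤ Z n ω} := by
    intro ω ⟨hsum, hall⟩
    have hZeq : Z n ω = Real.exp (n * c - lam * ∑ i ∈ Finset.Icc 1 n, X i ω) := by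
      have : ∀ i ∈ Finset.Icc 1 n, Real.exp (c - lam * X i ω) * D i ω
          = Real.exp (c - lam * X i ω) := by
        intro i hi
        have : ω ∈ {ω | γ ≤ p i ω} := hall i hi
        simp [hD, Set.indicator_of_mem this]
      rw [show Z n ω = ∏ i ∈ Finset.Icc 1 n, (Real.exp (c - lam * X i ω) * D i ω) from rfl,
        Finset.prod_congr rfl this, ← Real.exp_sum]
      congr 1
      rw [Finset.sum_sub_distrib, Finset.sum_const, Nat.card_Icc, ← Finset.mul_sum]
      push_cast
      ring
    have hexp : Real.log (1 / δ) ≤ n * c - lam * ∑ i ∈ Finset.Icc 1 n, X i ω := by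
      have h1 : lam * ∑ i ∈ Finset.Icc 1 n, X i ω ≤ lam * t :=
        mul_le_mul_of_nonneg_left hsum hlam.le
      have h2 : lam * t = lam * (n * γ) - lam ^ 2 / 2 * (n * γ) - Real.log (1 / δ) := by
        rw [ht]; field_simp
      have h3 : (n : ℝ) * c = lam * (n * γ) - lam ^ 2 / 2 * (n * γ) := by
        rw [hc]; ring
      rw [h2] at h1
      rw [h3]
      linarith
    show 1 / δ ≤ Z n ω
    rw [hZeq, show (1 : ℝ) / δ = Real.exp (Real.log (1 / δ)) from
      (Real.exp_log (by positivity)).symm]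
    exact Real.exp_le_exp.2 hexp
  have hmarkov := mul_meas_ge_le_integral_of_nonneg
    (Filter.Eventually.of_forall (hZnonneg n)) (hZint n) (1 / δ)
  have hfin : μ {ω | 1 / δ ≤ Z n ω} ≠ ⊤ := measure_ne_top μ _
  have htoReal : (μ {ω | 1 / δ ≤ Z n ω}).toReal ≤ δ := by
    have h1 : (1 / δ) * (μ {ω | 1 / δ ≤ Z n ω}).toReal ≤ 1 := le_trans hmarkov (hkey n)
    have h2 := mul_le_mul_of_nonneg_left h1 hδ0.le
    have h3 : δ * (1 / δ * (μ {ω | 1 / δ ≤ Z n ω}).toReal)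
        = (μ {ω | 1 / δ ≤ Z n ω}).toReal := by
      field_simp
    rw [h3] at h2
    linarith
  calc μ {ω | (∑ i ∈ Finset.Icc 1 n, X i ω ≤ t) ∧
        ∀ i ∈ Finset.Icc 1 n, γ ≤ (μ[X i | 𝒢 (i - 1)]) ω}
      ≤ μ {ω | 1 / δ ≤ Z n ω} := measure_mono hsubset
    _ ≤ ENNReal.ofReal δ := by
        rw [ENNReal.le_ofReal_iff_toReal_le hfin hδ0.le]
        exact htoReal
end
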